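/- Let 𝒦 = {K₁, …, K_M} be a finite set of row-stochastic N×N real matrices and let p₁, …, p_M be strictly positive reals summing to 1. Define E[Ψ₂(t)] = Σ_{(k₁,…,k_t) ∈ {1,…,M}^t} p_{k₁}⋯p_{k_t} · ‖(I−J)K_{k₁}⋯K_{k_t}‖_F² and R = ((I−J) ⊗ (I−J)) · Σᵢ pᵢ (Kᵢ ⊗ Kᵢ). Then for every real η > ρ(R) there exists a constant C > 0 such that E[Ψ₂(t)] ≤ C·η^t for all integers t ≥ 1. -/

import Mathlib

open Matrix Kronecker Finset
open scoped ENNReal NNReal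

/-- A square real matrix is row-stochastic if it has nonnegative entries and
each of its rows sums to 1. -/
def RowStochastic {N : ℕ} (K : Matrix (Fin N) (Fin N) ℝ) : Prop :=
  (∀ i j, 0 ≤ K i j) ∧ ∀ i, ∑ j, K i j = 1

/-- `J = (1/N) 𝟙 𝟙ᵀ`, the `N × N` averaging matrix. -/
noncomputable def Jmat (N : ℕ) : Matrix (Fin N) (Fin N) ℝ :=
  Matrix.of fun _ _ => (N : ℝ)⁻¹

/-- The spectral radius of a real square matrix: the maximum modulus of its
complex eigenvalues. -/
noncomputable def specRad {n : Type*} [Fintype n] [DecidableEq n]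
    (A : Matrix n n ℝ) : ℝ :=
  (spectralRadius ℂ (A.map Complex.ofReal)).toReal

/-! ### Auxiliary algebraic lemmas -/

lemma pow_sum_expand {R : Type*} [Semiring R] {ι : Type*} [Fintype ι] [DecidableEq ι]
    (A : ι → R) : ∀ t : ℕ, (∑ k, A k) ^ t = ∑ f : Fin t → ι, (List.ofFn fun s => A (f s)).prod
  | 0 => by simp
  | (t+1) => by
    rw [pow_succ', pow_sum_expand A t, Finset.sum_mul_sum, ← Fintype.sum_prod_type']
    apply Fintype.sum_equiv (Fin.consEquiv fun _ => ι)
    rintro ⟨k, f⟩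
    simp [List.ofFn_succ]

lemma Jmat_mul_Jmat {N : ℕ} (hN : 1 ≤ N) : Jmat N * Jmat N = Jmat N := by
  have h0 : (N : ℝ) ≠ 0 := Nat.cast_ne_zero.mpr (by omega)
  ext i j
  simp [Jmat, Matrix.mul_apply, Finset.sum_const, Finset.card_univ]
  field_simp

lemma mul_Jmat {N : ℕ} {K : Matrix (Fin N) (Fin N) ℝ} (hK : RowStochastic K) :
    K * Jmat N = Jmat N := by
  ext i j
  simp only [Jmat, Matrix.mul_apply, Matrix.of_apply, ← Finset.sum_mul, hK.2 i, one_mul]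

lemma sub_mul_sub {N : ℕ} (hN : 1 ≤ N) {K : Matrix (Fin N) (Fin N) ℝ} (hK : RowStochastic K) :
    (1 - Jmat N) * K * (1 - Jmat N) = (1 - Jmat N) * K := by
  have e1 : (1 - Jmat N) * K * (1 - Jmat N)
      = K - K * Jmat N - Jmat N * K + Jmat N * (K * Jmat N) := by noncomm_ring
  have e2 : (1 - Jmat N) * K = K - Jmat N * K := by noncomm_ring
  rw [e1, e2, mul_Jmat hK, Jmat_mul_Jmat hN]
  abel

lemma prod_sub_mul {N M : ℕ} (hN : 1 ≤ N) (K : Fin M → Matrix (Fin N) (Fin N) ℝ)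
    (hK : ∀ k, RowStochastic (K k)) (k : Fin M) (l : List (Fin M)) :
    ((k :: l).map fun k => (1 - Jmat N) * K k).prod = (1 - Jmat N) * ((k :: l).map K).prod := by
  induction l generalizing k with
  | nil => simp
  | cons k' l ih =>
    rw [List.map_cons, List.prod_cons, ih k', List.map_cons (f := K), List.prod_cons,
      ← mul_assoc, ← mul_assoc, sub_mul_sub hN (hK k)]
    simp [mul_assoc]

lemma kron_prod {N : ℕ} : ∀ (l : List (Matrix (Fin N) (Fin N) ℝ)),
    l.prod ⊗ₖ l.prod = (l.map fun A => A ⊗ₖ A).prod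
  | [] => by simp [Matrix.one_kronecker_one]
  | (A :: l) => by
    rw [List.map_cons, List.prod_cons, List.prod_cons, Matrix.mul_kronecker_mul, kron_prod l]

lemma smul_list_prod {n : Type*} [Fintype n] [DecidableEq n] {ι : Type*}
    (c : ι → ℝ) (B : ι → Matrix n n ℝ) : ∀ (l : List ι),
    (l.map fun k => c k • B k).prod = (l.map c).prod • (l.map B).prod
  | [] => by simp
  | (k :: l) => by
    rw [List.map_cons, List.prod_cons, smul_list_prod c B l, List.map_cons, List.prod_cons,
      List.map_cons, List.prod_cons, smul_mul_smul_comm]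

/-! ### The key combinatorial identity -/

lemma key_identity {N M : ℕ} (hN : 1 ≤ N) (K : Fin M → Matrix (Fin N) (Fin N) ℝ)
    (hK : ∀ k, RowStochastic (K k)) (p : Fin M → ℝ)
    (R : Matrix (Fin N × Fin N) (Fin N × Fin N) ℝ)
    (hR : R = ((1 - Jmat N) ⊗ₖ (1 - Jmat N)) * ∑ k, p k • (K k ⊗ₖ K k))
    (t' : ℕ) :
    ∑ f : Fin (t' + 1) → Fin M, (∏ s, p (f s)) *
        ∑ i, ∑ j, (((1 - Jmat N) * (List.ofFn fun s => K (f s)).prod) i j) ^ 2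
      = ∑ i, ∑ j, (R ^ (t' + 1)) (i, i) (j, j) := by
  set Q : Fin M → Matrix (Fin N) (Fin N) ℝ := fun k => (1 - Jmat N) * K k with hQ
  set A : Fin M → Matrix (Fin N × Fin N) (Fin N × Fin N) ℝ :=
    fun k => p k • (Q k ⊗ₖ Q k) with hA
  have hRsum : R = ∑ k, A k := by
    rw [hR, Finset.mul_sum]
    refine Finset.sum_congr rfl fun k _ => ?_
    rw [mul_smul_comm, ← Matrix.mul_kronecker_mul]
  have hpow : R ^ (t' + 1) = ∑ f : Fin (t' + 1) → Fin M, (List.ofFn fun s => A (f s)).prod := by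
    rw [hRsum, pow_sum_expand]
  have per_f : ∀ f : Fin (t' + 1) → Fin M,
      (∏ s, p (f s)) *
          ∑ i, ∑ j, (((1 - Jmat N) * (List.ofFn fun s => K (f s)).prod) i j) ^ 2
        = ∑ i, ∑ j, ((List.ofFn fun s => A (f s)).prod) (i, i) (j, j) := by
    intro f
    have hfin : (List.ofFn fun s => A (f s)).prod
        = (∏ s, p (f s)) • (((1 - Jmat N) * (List.ofFn fun s => K (f s)).prod) ⊗ₖ
            ((1 - Jmat N) * (List.ofFn fun s => K (f s)).prod)) := by
      have h1 : (List.ofFn fun s => A (f s))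
          = (List.ofFn f).map (fun k => p k • (Q k ⊗ₖ Q k)) := by
        simp [List.map_ofFn, Function.comp_def, hA]
      rw [h1, smul_list_prod]
      have h2 : ((List.ofFn f).map Q).prod
          = (1 - Jmat N) * (List.ofFn fun s => K (f s)).prod := by
        rw [show (List.ofFn fun s => K (f s)) = (List.ofFn f).map K by
          simp [List.map_ofFn, Function.comp_def]]
        rw [List.ofFn_succ (f := f)]
        exact prod_sub_mul hN K hK (f 0) _
      congr 1
      · simp [List.map_ofFn, List.prod_ofFn, Function.comp_def, Fin.prod_univ_succ]
      · rw [show (List.ofFn f).map (fun k => Q k ⊗ₖ Q k)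
            = ((List.ofFn f).map Q).map (fun X => X ⊗ₖ X) by rw [List.map_map]; rfl,
          ← kron_prod, h2]
    rw [hfin]
    simp only [Matrix.smul_apply, Matrix.kroneckerMap_apply, smul_eq_mul, Finset.mul_sum, sq]
  calc ∑ f : Fin (t' + 1) → Fin M, (∏ s, p (f s)) *
          ∑ i, ∑ j, (((1 - Jmat N) * (List.ofFn fun s => K (f s)).prod) i j) ^ 2
      = ∑ f : Fin (t' + 1) → Fin M, ∑ i, ∑ j,
          ((List.ofFn fun s => A (f s)).prod) (i, i) (j, j) :=
        Finset.sum_congr rfl fun f _ => per_f f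
    _ = ∑ i, ∑ f : Fin (t' + 1) → Fin M, ∑ j,
          ((List.ofFn fun s => A (f s)).prod) (i, i) (j, j) := Finset.sum_comm
    _ = ∑ i, ∑ j, ∑ f : Fin (t' + 1) → Fin M,
          ((List.ofFn fun s => A (f s)).prod) (i, i) (j, j) :=
        Finset.sum_congr rfl fun i _ => Finset.sum_comm
    _ = ∑ i, ∑ j, (R ^ (t' + 1)) (i, i) (j, j) := by
        simp only [hpow, Matrix.sum_apply]

/-! ### Norm estimates via Gelfand's formula -/

attribute [local instance] Matrix.linftyOpNormedAddCommGroup Matrix.linftyOpNormedRing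
  Matrix.linftyOpNormedAlgebra

noncomputable instance matrixComplete {n : Type*} [Fintype n] :
    CompleteSpace (Matrix n n ℂ) :=
  inferInstanceAs (CompleteSpace (n → n → ℂ))

lemma nnnorm_map_ofReal {m n : Type*} [Fintype m] [Fintype n] (B : Matrix m n ℝ) :
    ‖B.map Complex.ofReal‖₊ = ‖B‖₊ := by
  rw [Matrix.linfty_opNNNorm_def, Matrix.linfty_opNNNorm_def]
  congr 1; ext i; congr 1; ext j
  simp [Matrix.map_apply]

lemma norm_map_ofReal {m n : Type*} [Fintype m] [Fintype n] (B : Matrix m n ℝ) :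
    ‖B.map Complex.ofReal‖ = ‖B‖ := congrArg NNReal.toReal (nnnorm_map_ofReal B)

lemma map_ofReal_pow {n : Type*} [Fintype n] [DecidableEq n] (A : Matrix n n ℝ) :
    ∀ t : ℕ, (A ^ t).map Complex.ofReal = (A.map Complex.ofReal) ^ t
  | 0 => by
    simp only [pow_zero]
    exact Matrix.map_one _ Complex.ofReal_zero Complex.ofReal_one
  | (t+1) => by
    rw [pow_succ, pow_succ, ← map_ofReal_pow A t]
    exact Matrix.map_mul (f := Complex.ofRealHom)

lemma exists_pow_norm_le {n : Type*} [Fintype n] [DecidableEq n] [Nonempty n]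
    (A : Matrix n n ℝ) {η : ℝ} (hη : specRad A < η) :
    ∃ C : ℝ, 0 < C ∧ ∀ t : ℕ, ‖A ^ t‖ ≤ C * η ^ t := by
  have hη0 : 0 < η := lt_of_le_of_lt ENNReal.toReal_nonneg hη
  set Ac := A.map Complex.ofReal with hAc
  have hfin : spectralRadius ℂ Ac ≠ ⊤ :=
    ne_top_of_le_ne_top ENNReal.coe_ne_top (spectrum.spectralRadius_le_nnnorm (𝕜 := ℂ) Ac)
  have hlt : spectralRadius ℂ Ac < ENNReal.ofReal η :=
    (ENNReal.lt_ofReal_iff_toReal_lt hfin).mpr hη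
  have hT := spectrum.pow_nnnorm_pow_one_div_tendsto_nhds_spectralRadius Ac
  have hev : ∀ᶠ t : ℕ in Filter.atTop,
      (‖Ac ^ t‖₊ : ℝ≥0∞) ^ (1 / (t : ℝ)) < ENNReal.ofReal η :=
    hT.eventually_lt_const hlt
  obtain ⟨n₀, hn₀⟩ := Filter.eventually_atTop.mp hev
  have key : ∀ t : ℕ, max n₀ 1 ≤ t → ‖A ^ t‖ ≤ η ^ t := by
    intro t ht
    have ht1 : 1 ≤ t := le_trans (le_max_right _ _) ht
    have htn : n₀ ≤ t := le_trans (le_max_left _ _) ht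
    have h1 := hn₀ t htn
    have h2 : (‖Ac ^ t‖₊ : ℝ≥0∞) ≤ (ENNReal.ofReal η) ^ t := by
      have h3 : ((‖Ac ^ t‖₊ : ℝ≥0∞) ^ (1 / (t : ℝ))) ^ t ≤ (ENNReal.ofReal η) ^ t :=
        pow_le_pow_left₀ zero_le h1.le t
      have htr : ((t : ℝ)) ≠ 0 := Nat.cast_ne_zero.mpr (by omega)
      rwa [← ENNReal.rpow_natCast ((‖Ac ^ t‖₊ : ℝ≥0∞) ^ (1 / (t : ℝ))) t,
        ← ENNReal.rpow_mul, one_div, inv_mul_cancel₀ htr, ENNReal.rpow_one] at h3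
    have h4 : (‖Ac ^ t‖₊ : ℝ≥0∞) ≤ ENNReal.ofReal (η ^ t) := by
      rwa [ENNReal.ofReal_pow hη0.le]
    have h5 : ‖Ac ^ t‖ ≤ η ^ t := by
      have := ENNReal.toReal_le_of_le_ofReal (pow_nonneg hη0.le t) h4
      simpa using this
    rw [← norm_map_ofReal (A ^ t), map_ofReal_pow]
    exact h5
  set n₁ := max n₀ 1
  set C₁ : ℝ := ((Finset.range (n₁ + 1)).image fun t => ‖A ^ t‖ / η ^ t).max' (by simp) with hC₁
  refine ⟨max C₁ 1, lt_of_lt_of_le one_pos (le_max_right _ _), fun t => ?_⟩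
  have hηt : (0:ℝ) < η ^ t := pow_pos hη0 t
  rcases le_or_gt t n₁ with h | h
  · have hmem : ‖A ^ t‖ / η ^ t ∈ (Finset.range (n₁ + 1)).image fun t => ‖A ^ t‖ / η ^ t :=
      Finset.mem_image_of_mem _ (Finset.mem_range.mpr (by omega))
    have h6 : ‖A ^ t‖ / η ^ t ≤ max C₁ 1 :=
      le_trans (Finset.le_max' _ _ hmem) (le_max_left _ _)
    calc ‖A ^ t‖ = (‖A ^ t‖ / η ^ t) * η ^ t := by field_simp
      _ ≤ max C₁ 1 * η ^ t := by nlinarith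
  · calc ‖A ^ t‖ ≤ η ^ t := key t h.le
      _ ≤ max C₁ 1 * η ^ t := le_mul_of_one_le_left hηt.le (le_max_right _ _)

lemma diag_sum_le_norm {N : ℕ} (X : Matrix (Fin N × Fin N) (Fin N × Fin N) ℝ) :
    ∑ i, ∑ j, X (i, i) (j, j) ≤ (N : ℝ) * ‖X‖ := by
  have hrow : ∀ r : Fin N × Fin N, ∑ c, |X r c| ≤ ‖X‖ := by
    intro r
    have h1 : (∑ c, ‖X r c‖₊) ≤ ‖X‖₊ := by
      rw [Matrix.linfty_opNNNorm_def]
      exact Finset.le_sup (f := fun i => ∑ j, ‖X i j‖₊) (Finset.mem_univ r)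
    calc ∑ c, |X r c| = ((∑ c, ‖X r c‖₊ : ℝ≥0) : ℝ) := by
          push_cast
          exact Finset.sum_congr rfl fun c _ => (Real.norm_eq_abs _).symm
      _ ≤ ((‖X‖₊ : ℝ≥0) : ℝ) := by exact_mod_cast h1
      _ = ‖X‖ := rfl
  have hsub : ∀ i : Fin N, ∑ j, |X (i, i) (j, j)| ≤ ∑ c, |X (i, i) c| := by
    intro i
    rw [← Finset.sum_image (f := fun c => |X (i, i) c|) (g := fun j : Fin N => (j, j))
      (by intro a _ b _ h; exact (Prod.ext_iff.mp h).1)]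
    exact Finset.sum_le_sum_of_subset_of_nonneg (Finset.subset_univ _)
      (fun c _ _ => abs_nonneg _)
  calc ∑ i, ∑ j, X (i, i) (j, j) ≤ ∑ i : Fin N, ∑ j, |X (i, i) (j, j)| :=
        Finset.sum_le_sum fun i _ => Finset.sum_le_sum fun j _ => le_abs_self _
    _ ≤ ∑ _i : Fin N, ‖X‖ :=
        Finset.sum_le_sum fun i _ => le_trans (hsub i) (hrow (i, i))
    _ = (N : ℝ) * ‖X‖ := by simp [Finset.sum_const, mul_comm]

/-! ### Main theorem -/

theorem stmt7 {N M : ℕ} (hN : 1 ≤ N) (hM : 1 ≤ M)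
    (K : Fin M → Matrix (Fin N) (Fin N) ℝ)
    (hK : ∀ k, RowStochastic (K k))
    (p : Fin M → ℝ) (hp : ∀ k, 0 < p k) (hpsum : ∑ k, p k = 1)
    (R : Matrix (Fin N × Fin N) (Fin N × Fin N) ℝ)
    (hR : R = ((1 - Jmat N) ⊗ₖ (1 - Jmat N)) * ∑ k, p k • (K k ⊗ₖ K k))
    (EΨ₂ : ℕ → ℝ)
    (hEΨ₂ : ∀ t, EΨ₂ t = ∑ f : Fin t → Fin M, (∏ s, p (f s)) *
        ∑ i, ∑ j, (((1 - Jmat N) * (List.ofFn fun s => K (f s)).prod) i j) ^ 2) :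
    ∀ η : ℝ, specRad R < η → ∃ C : ℝ, 0 < C ∧ ∀ t : ℕ, 1 ≤ t → EΨ₂ t ≤ C * η ^ t := by
  intro η hη
  have : Nonempty (Fin N) := ⟨⟨0, hN⟩⟩
  obtain ⟨C₀, hC₀, hbound⟩ := exists_pow_norm_le R hη
  refine ⟨(N : ℝ) * C₀ + 1, by positivity, fun t ht => ?_⟩
  obtain ⟨t', rfl⟩ : ∃ t', t = t' + 1 := ⟨t - 1, by omega⟩
  have hη0 : 0 < η := lt_of_le_of_lt ENNReal.toReal_nonneg hη
  have h1 : EΨ₂ (t' + 1) = ∑ i, ∑ j, (R ^ (t' + 1)) (i, i) (j, j) := by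
    rw [hEΨ₂]; exact key_identity hN K hK p R hR t'
  calc EΨ₂ (t' + 1) = ∑ i, ∑ j, (R ^ (t' + 1)) (i, i) (j, j) := h1
    _ ≤ (N : ℝ) * ‖R ^ (t' + 1)‖ := diag_sum_le_norm _
    _ ≤ (N : ℝ) * (C₀ * η ^ (t' + 1)) := by
        have := hbound (t' + 1)
        have hN0 : (0:ℝ) ≤ (N : ℝ) := Nat.cast_nonneg N
        nlinarith [norm_nonneg (R ^ (t' + 1))]
    _ ≤ ((N : ℝ) * C₀ + 1) * η ^ (t' + 1) := by
        have hηt : (0:ℝ) < η ^ (t' + 1) := pow_pos hη0 _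
        nlinarith
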